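/- arXiv:2212.02471 — 5 statements merged into one kernel-verified Lean document; each statement's English description precedes it below -/
import Mathlib

section
/- Let n ≥ 1 be an integer, let t_0, t_1, …, t_n be integers with 1 = t_0 < t_1 < ⋯ < t_n, and set δ = max_{1 ≤ s ≤ n} (t_s − t_0)/s. Then for all real numbers a_0 ≥ a_1 ≥ ⋯ ≥ a_{n−1} ≥ 1, we have a_0^{t_1 − t_0} · a_1^{t_2 − t_1} ⋯ a_{n−1}^{t_n − t_{n−1}} ≤ (a_0 · a_1 ⋯ a_{n−1})^δ. -/
open Finset

lemma abel_aux (n : ℕ) : ∀ (b u v : ℕ → ℝ),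
    (∀ i, i + 1 < n → b (i + 1) ≤ b i) → (∀ i < n, 0 ≤ b i) →
    (∀ s ≤ n, ∑ i ∈ range s, u i ≤ ∑ i ∈ range s, v i) →
    ∑ i ∈ range n, u i * b i ≤ ∑ i ∈ range n, v i * b i := by
  induction n with
  | zero => simp
  | succ n ih =>
    intro b u v hdec hpos hsum
    have hchain : ∀ i ≤ n, b n ≤ b i := by
      intro i hi
      have h2 : ∀ j, i ≤ j → j ≤ n → b j ≤ b i := by
        intro j hj
        induction j, hj using Nat.le_induction with
        | base => intro _; exact le_refl _
        | succ j hj ihj => intro hjn; exact le_trans (hdec j (by omega)) (ihj (by omega))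
      exact h2 n hi le_rfl
    set c := b n with hc
    have key : ∀ w : ℕ → ℝ, ∑ i ∈ range (n+1), w i * b i
        = ∑ i ∈ range n, w i * (b i - c) + c * ∑ i ∈ range (n+1), w i := by
      intro w
      have h1 : ∑ i ∈ range n, w i * (b i - c)
          = ∑ i ∈ range n, w i * b i - ∑ i ∈ range n, c * w i := by
        rw [← Finset.sum_sub_distrib]
        exact Finset.sum_congr rfl fun i _ => by ring
      rw [Finset.sum_range_succ (f := fun i => w i * b i), Finset.sum_range_succ w, h1,
        mul_add, Finset.mul_sum]
      ring
    rw [key u, key v]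
    have hA : ∑ i ∈ range n, u i * (b i - c) ≤ ∑ i ∈ range n, v i * (b i - c) := by
      apply ih
      · intro i hi; exact sub_le_sub_right (hdec i (by omega)) c
      · intro i hi; exact sub_nonneg.mpr (hchain i (by omega))
      · intro s hs; exact hsum s (by omega)
    have hc0 : 0 ≤ c := hpos n (by omega)
    have hB : c * ∑ i ∈ range (n+1), u i ≤ c * ∑ i ∈ range (n+1), v i :=
      mul_le_mul_of_nonneg_left (hsum (n+1) le_rfl) hc0
    linarith

theorem stmt_0 (n : ℕ) (hn : 1 ≤ n) (t : ℕ → ℤ) (ht0 : t 0 = 1)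
    (hmono : ∀ i < n, t i < t (i + 1)) (δ : ℝ)
    (hδ : IsGreatest {x : ℝ | ∃ s : ℕ, 1 ≤ s ∧ s ≤ n ∧ x = ((t s : ℝ) - (t 0 : ℝ)) / s} δ)
    (a : ℕ → ℝ) (hdec : ∀ i, i + 1 < n → a (i + 1) ≤ a i) (ha1 : ∀ i < n, 1 ≤ a i) :
    ∏ i ∈ Finset.range n, a i ^ (t (i + 1) - t i) ≤
      (∏ i ∈ Finset.range n, a i) ^ δ := by
  have hpos : ∀ i < n, (0:ℝ) < a i := fun i hi => lt_of_lt_of_le one_pos (ha1 i hi)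
  -- LHS as exp of a sum
  have hL : ∏ i ∈ range n, a i ^ (t (i + 1) - t i)
      = Real.exp (∑ i ∈ range n, ((t (i+1) - t i : ℤ) : ℝ) * Real.log (a i)) := by
    rw [Real.exp_sum]
    apply Finset.prod_congr rfl
    intro i hi
    rw [← Real.rpow_intCast, Real.rpow_def_of_pos (hpos i (mem_range.mp hi)), mul_comm]
  have hprodpos : (0:ℝ) < ∏ i ∈ range n, a i :=
    Finset.prod_pos (fun i hi => hpos i (mem_range.mp hi))
  have hR : (∏ i ∈ range n, a i) ^ δ
      = Real.exp (∑ i ∈ range n, δ * Real.log (a i)) := by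
    rw [Real.rpow_def_of_pos hprodpos, Real.log_prod
      (fun i hi => ne_of_gt (hpos i (mem_range.mp hi))), mul_comm, Finset.mul_sum]
  rw [hL, hR, Real.exp_le_exp]
  have hδub := hδ.2
  have hsum : ∀ s ≤ n, ∑ i ∈ range s, ((t (i+1) - t i : ℤ) : ℝ) ≤ ∑ i ∈ range s, δ := by
    intro s hs
    rcases Nat.eq_zero_or_pos s with rfl | hs1
    · simp
    · have hmem : ((t s : ℝ) - (t 0 : ℝ)) / s ≤ δ := hδub ⟨s, hs1, hs, rfl⟩
      have htel : ∑ i ∈ range s, (t (i+1) - t i) = t s - t 0 := Finset.sum_range_sub t s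
      have hsr : (0:ℝ) < (s:ℝ) := by exact_mod_cast hs1
      have : ((t s : ℝ) - (t 0 : ℝ)) ≤ δ * s := by
        rw [div_le_iff₀ hsr] at hmem; linarith
      have h2 : ((∑ i ∈ range s, (t (i+1) - t i) : ℤ) : ℝ) = (t s : ℝ) - (t 0 : ℝ) := by
        rw [htel]; push_cast; ring
      calc ∑ i ∈ range s, ((t (i+1) - t i : ℤ) : ℝ)
          = ((t s : ℝ) - (t 0 : ℝ)) := by rw [← h2]; exact (Int.cast_sum _ _).symm
        _ ≤ δ * s := this
        _ = ∑ i ∈ range s, δ := by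
            rw [Finset.sum_const, Finset.card_range, nsmul_eq_mul, mul_comm]
  exact abel_aux n (fun i => Real.log (a i)) (fun i => ((t (i+1) - t i : ℤ) : ℝ))
    (fun _ => δ)
    (fun i hi => Real.log_le_log (lt_of_lt_of_le one_pos (ha1 (i+1) hi)) (hdec i hi))
    (fun i hi => Real.log_nonneg (ha1 i hi)) hsum
end

section
/- Let θ be a real number with 0 < θ ≤ 1/2 and let q be a positive integer. Then there exists a finite set W of cardinality at most (e/θ)^{q−1}, consisting of tuples (c_1, …, c_q) of nonnegative real numbers with c_1 + ⋯ + c_q = 1, with the following property: for every choice of real numbers A_1, …, A_q and Λ with A_j ≤ 0 for j = 1, …, q and A_1 + ⋯ + A_q ≤ −Λ, there exists a tuple (c_1, …, c_q) ∈ W such that A_j ≤ −c_j (1 − θ) Λ for all j = 1, …, q. -/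
open Finset

lemma aux_pow_le_factorial (k : ℕ) (hk : 1 ≤ k) :
    (k : ℝ) ^ k ≤ (k.factorial : ℝ) * Real.exp 1 ^ (k - 1) := by
  induction k, hk using Nat.le_induction with
  | base => simp
  | succ n hn ih =>
    have hn0 : (0:ℝ) < n := by exact_mod_cast hn
    have hb : ((n:ℝ) + 1) ≤ (n:ℝ) * Real.exp (1 / n) := by
      have h1 := Real.add_one_le_exp (1 / (n:ℝ))
      have := mul_le_mul_of_nonneg_left h1 hn0.le
      calc ((n:ℝ) + 1) = n * (1/n + 1) := by field_simp; ring
        _ ≤ n * Real.exp (1/n) := this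
    have hexp : Real.exp (1 / n) ^ n = Real.exp 1 := by
      rw [← Real.exp_nat_mul]
      congr 1
      field_simp
    have h2 : ((n:ℝ) + 1) ^ n ≤ (n:ℝ) ^ n * Real.exp 1 := by
      calc ((n:ℝ) + 1) ^ n ≤ ((n:ℝ) * Real.exp (1/n)) ^ n := by
            apply pow_le_pow_left₀ (by positivity) hb
        _ = (n:ℝ) ^ n * Real.exp 1 := by rw [mul_pow, hexp]
    have hfac : (0:ℝ) < n.factorial := by exact_mod_cast n.factorial_pos
    have hcast : ((n+1).factorial : ℝ) = (n+1) * n.factorial := by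
      push_cast [Nat.factorial_succ]; ring
    have hepow : Real.exp 1 ^ (n - 1) * Real.exp 1 = Real.exp 1 ^ n := by
      rw [← pow_succ]
      congr 1
      omega
    have hc : ((n+1:ℕ):ℝ) = (n:ℝ)+1 := by push_cast; ring
    rw [hc]
    calc ((n:ℝ)+1) ^ (n+1) = ((n:ℝ)+1) * ((n:ℝ)+1) ^ n := by push_cast; ring
      _ ≤ ((n:ℝ)+1) * ((n:ℝ) ^ n * Real.exp 1) := by
          apply mul_le_mul_of_nonneg_left h2 (by positivity)
      _ ≤ ((n:ℝ)+1) * ((n.factorial : ℝ) * Real.exp 1 ^ (n-1) * Real.exp 1) := by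
          apply mul_le_mul_of_nonneg_left _ (by positivity)
          exact mul_le_mul_of_nonneg_right ih (Real.exp_pos 1).le
      _ = ((n+1).factorial : ℝ) * Real.exp 1 ^ ((n+1) - 1) := by
          rw [hcast]
          simp only [Nat.add_sub_cancel]
          rw [← hepow]
          ring

lemma exists_le_sum {ι : Type*} [DecidableEq ι] (s : Finset ι) (t : ι → ℕ) (M : ℕ)
    (h : M ≤ ∑ i ∈ s, t i) : ∃ k : ι → ℕ, (∀ i, k i ≤ t i) ∧ ∑ i ∈ s, k i = M := by
  induction s using Finset.induction_on generalizing M with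
  | empty =>
    simp only [Finset.sum_empty, Nat.le_zero] at h
    exact ⟨fun _ => 0, fun _ => Nat.zero_le _, by simp [h]⟩
  | @insert a s ha ih =>
    rw [Finset.sum_insert ha] at h
    have hmin : min M (t a) = M ∨ min M (t a) = t a := min_choice _ _
    obtain ⟨k, hk, hsum⟩ := ih (M - min M (t a)) (by rcases hmin with h'|h' <;> omega)
    refine ⟨Function.update k a (min M (t a)), ?_, ?_⟩
    · intro i
      rcases eq_or_ne i a with rfl | hi
      · simp only [Function.update_self]; exact min_le_right _ _
      · simp only [Function.update_of_ne hi]; exact hk i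
    · rw [Finset.sum_insert ha, Function.update_self, Finset.sum_update_of_notMem ha, hsum]
      rcases hmin with h'|h' <;> omega

lemma choose_bound (θ : ℝ) (hθ0 : 0 < θ) (hθ1 : θ ≤ 1) (n k : ℕ)
    (hn : (n : ℝ) ≤ (k:ℝ)/θ + 1) : ((n.choose k : ℝ)) ≤ (Real.exp 1 / θ) ^ k := by
  rcases Nat.eq_zero_or_pos k with rfl | hk
  · simp
  have hk0 : (0:ℝ) < k := by exact_mod_cast hk
  have hfac : (0:ℝ) < k.factorial := by exact_mod_cast k.factorial_pos
  -- (1) choose * k! ≤ n^k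
  have h1 : (n.choose k : ℝ) * k.factorial ≤ (n:ℝ) ^ k := by
    have := Nat.choose_le_pow_div (α := ℝ) k n
    rw [div_eq_mul_inv] at this
    calc (n.choose k : ℝ) * k.factorial ≤ ((n:ℝ)^k * (k.factorial:ℝ)⁻¹) * k.factorial := by
          apply mul_le_mul_of_nonneg_right _ hfac.le
          exact_mod_cast this
      _ = (n:ℝ)^k := by field_simp
  -- (2) k^k ≤ k! * e^(k-1)
  have h2 := aux_pow_le_factorial k hk
  -- (3) n^k ≤ (k/θ)^k * exp θ
  have h3 : (n:ℝ) ^ k ≤ ((k:ℝ)/θ) ^ k * Real.exp θ := by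
    have hb : (n:ℝ) ≤ ((k:ℝ)/θ) * Real.exp (θ/k) := by
      have h1' := Real.add_one_le_exp (θ / (k:ℝ))
      have := mul_le_mul_of_nonneg_left h1' (by positivity : (0:ℝ) ≤ (k:ℝ)/θ)
      calc (n:ℝ) ≤ (k:ℝ)/θ + 1 := hn
        _ = ((k:ℝ)/θ) * (θ/k + 1) := by field_simp; ring
        _ ≤ ((k:ℝ)/θ) * Real.exp (θ/k) := this
    have hexp : Real.exp (θ / k) ^ k = Real.exp θ := by
      rw [← Real.exp_nat_mul]
      congr 1
      field_simp
    calc (n:ℝ) ^ k ≤ (((k:ℝ)/θ) * Real.exp (θ/k)) ^ k :=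
          pow_le_pow_left₀ (Nat.cast_nonneg n) hb k
      _ = ((k:ℝ)/θ) ^ k * Real.exp θ := by rw [mul_pow, hexp]
  -- combine
  have hkk : (0:ℝ) < (k:ℝ)^k := by positivity
  have key : (n.choose k : ℝ) * ((k:ℝ)^k) ≤ ((k:ℝ)^k) * (Real.exp θ * Real.exp 1 ^ (k-1) / θ^k) := by
    calc (n.choose k : ℝ) * ((k:ℝ)^k)
        ≤ (n.choose k : ℝ) * ((k.factorial : ℝ) * Real.exp 1 ^ (k-1)) := by
          apply mul_le_mul_of_nonneg_left h2 (Nat.cast_nonneg _)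
      _ = ((n.choose k : ℝ) * k.factorial) * Real.exp 1 ^ (k-1) := by ring
      _ ≤ (n:ℝ)^k * Real.exp 1 ^ (k-1) := by
          apply mul_le_mul_of_nonneg_right h1 (by positivity)
      _ ≤ (((k:ℝ)/θ)^k * Real.exp θ) * Real.exp 1 ^ (k-1) := by
          apply mul_le_mul_of_nonneg_right h3 (by positivity)
      _ = ((k:ℝ)^k) * (Real.exp θ * Real.exp 1 ^ (k-1) / θ^k) := by
          rw [div_pow]; field_simp
  have hfin : (n.choose k : ℝ) ≤ Real.exp θ * Real.exp 1 ^ (k-1) / θ^k := by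
    have := (mul_le_mul_iff_of_pos_right hkk).mp (by linarith [key] : (n.choose k : ℝ) * ((k:ℝ)^k) ≤ (Real.exp θ * Real.exp 1 ^ (k-1) / θ^k) * ((k:ℝ)^k))
    exact this
  calc (n.choose k : ℝ) ≤ Real.exp θ * Real.exp 1 ^ (k-1) / θ^k := hfin
    _ ≤ Real.exp 1 * Real.exp 1 ^ (k-1) / θ^k := by
        gcongr
    _ = (Real.exp 1 / θ) ^ k := by
        have h' : Real.exp 1 * Real.exp 1 ^ (k-1) = Real.exp 1 ^ k := by
          rw [← pow_succ']
          congr 1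
          omega
        rw [h', div_pow]

theorem stmt_1 (θ : ℝ) (hθ0 : 0 < θ) (hθ : θ ≤ 1 / 2) (q : ℕ) (hq : 1 ≤ q) :
    ∃ W : Finset (Fin q → ℝ),
      (W.card : ℝ) ≤ (Real.exp 1 / θ) ^ (q - 1) ∧
      (∀ c ∈ W, (∀ j, 0 ≤ c j) ∧ ∑ j, c j = 1) ∧
      (∀ (A : Fin q → ℝ) (Λ : ℝ), (∀ j, A j ≤ 0) → ∑ j, A j ≤ -Λ →
        ∃ c ∈ W, ∀ j, A j ≤ -(c j) * (1 - θ) * Λ) := by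
  have h1θ : (0:ℝ) < 1 - θ := by linarith
  have hq1 : (1:ℝ) ≤ q := by exact_mod_cast hq
  set x : ℝ := ((q:ℝ) - 1) * (1 - θ) / θ with hx
  have hx0 : 0 ≤ x := by
    apply div_nonneg _ hθ0.le
    apply mul_nonneg <;> linarith
  set M : ℕ := ⌊x⌋₊ + 1 with hMdef
  have hM0 : 0 < M := Nat.succ_pos _
  have hM0' : (0:ℝ) < M := by exact_mod_cast hM0
  have hMgt : x < M := by
    have := Nat.lt_floor_add_one x
    push_cast [hMdef]
    exact_mod_cast this
  have hMle : (M:ℝ) ≤ x + 1 := by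
    have := Nat.floor_le hx0
    push_cast [hMdef]
    linarith
  -- key numeric consequence: (q-1)(1-θ) < M θ
  have hkey : ((q:ℝ) - 1) * (1 - θ) < M * θ := by
    rw [hx, div_lt_iff₀ hθ0] at hMgt
    linarith
  classical
  let f : Sym (Fin q) M → (Fin q → ℝ) := fun s j => ((s : Multiset (Fin q)).count j : ℝ) / M
  refine ⟨Finset.univ.image f, ?_, ?_, ?_⟩
  · -- cardinality
    have hcard : (Finset.univ.image f).card ≤ (q + M - 1).choose (q - 1) := by
      have h1 : (Finset.univ.image f).card ≤ Fintype.card (Sym (Fin q) M) := by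
        simpa [Finset.card_univ] using
          Finset.card_image_le (s := (Finset.univ : Finset (Sym (Fin q) M))) (f := f)
      have h2 : Fintype.card (Sym (Fin q) M) = (q + M - 1).choose M := by
        rw [Sym.card_sym_eq_choose, Fintype.card_fin]
      have h3 : (q + M - 1).choose M = (q + M - 1).choose (q - 1) := by
        rw [← Nat.choose_symm (by omega : q - 1 ≤ q + M - 1)]
        congr 1
        omega
      omega
    have hch : ((q + M - 1).choose (q - 1) : ℝ) ≤ (Real.exp 1 / θ) ^ (q - 1) := by
      apply choose_bound θ hθ0 (by linarith) _ _ ?_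
      have hcast : ((q + M - 1 : ℕ) : ℝ) = (q:ℝ) + M - 1 := by
        push_cast [Nat.cast_sub (by omega : 1 ≤ q + M)]
        ring
      have hcast2 : ((q - 1 : ℕ) : ℝ) = (q:ℝ) - 1 := by
        push_cast [Nat.cast_sub hq]
        ring
      rw [hcast, hcast2]
      -- q + M - 1 ≤ (q-1)/θ + 1 :  M ≤ x + 1 = (q-1)(1-θ)/θ + 1
      have : x = ((q:ℝ)-1)/θ - ((q:ℝ)-1) := by
        rw [hx]; field_simp
      linarith
    calc ((Finset.univ.image f).card : ℝ) ≤ ((q + M - 1).choose (q - 1) : ℝ) := by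
          exact_mod_cast hcard
      _ ≤ (Real.exp 1 / θ) ^ (q - 1) := hch
  · -- membership properties
    rintro c hc
    obtain ⟨s, -, rfl⟩ := Finset.mem_image.mp hc
    constructor
    · intro j
      positivity
    · have hsum : ∑ j, ((s : Multiset (Fin q)).count j : ℝ) = (M:ℝ) := by
        have h := Multiset.sum_count_eq_card (s := (Finset.univ : Finset (Fin q)))
          (m := (s : Multiset (Fin q))) (fun a _ => Finset.mem_univ a)
        rw [Sym.card_coe] at h
        exact_mod_cast congrArg (Nat.cast : ℕ → ℝ) h
      simp only [f]
      rw [← Finset.sum_div, hsum, div_self (ne_of_gt hM0')]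
  · -- covering property
    intro A Λ hA hsum
    rcases le_or_gt Λ 0 with hΛ | hΛ
    · -- Λ ≤ 0 : any element works
      refine ⟨f (Sym.replicate M ⟨0, hq⟩), Finset.mem_image_of_mem f (Finset.mem_univ _), ?_⟩
      intro j
      have hc : 0 ≤ f (Sym.replicate M ⟨0, hq⟩) j := by positivity
      have : 0 ≤ f (Sym.replicate M ⟨0, hq⟩) j * (1 - θ) * (-Λ) := by
        apply mul_nonneg (mul_nonneg hc h1θ.le) (by linarith)
      calc A j ≤ 0 := hA j
        _ ≤ -(f (Sym.replicate M ⟨0, hq⟩) j) * (1 - θ) * Λ := by nlinarith [this]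
    · -- Λ > 0
      set a : Fin q → ℝ := fun j => -A j / Λ with ha
      have ha0 : ∀ j, 0 ≤ a j := fun j => div_nonneg (by linarith [hA j]) hΛ.le
      have hasum : 1 ≤ ∑ j, a j := by
        rw [ha]
        simp only
        rw [← Finset.sum_div]
        rw [le_div_iff₀ hΛ]
        have : ∑ j, -A j = -∑ j, A j := by
          rw [← Finset.sum_neg_distrib]
        rw [this]
        linarith
      set t : Fin q → ℕ := fun j => ⌊(M:ℝ) * a j / (1 - θ)⌋₊ with ht
      have htlb : ∀ j, (M:ℝ) * a j / (1 - θ) - 1 < (t j : ℝ) := by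
        intro j
        simp only [ht]
        have h := Nat.lt_floor_add_one ((M:ℝ) * a j / (1 - θ))
        linarith
      have htsum : M ≤ ∑ j, t j := by
        have h1 : (M:ℝ) / (1 - θ) - q < ∑ j, (t j : ℝ) := by
          have h2 : ∑ j, ((M:ℝ) * a j / (1 - θ) - 1) < ∑ j, (t j : ℝ) :=
            Finset.sum_lt_sum_of_nonempty ⟨⟨0, hq⟩, Finset.mem_univ _⟩ (fun j _ => htlb j)
          have h3 : ∑ j, ((M:ℝ) * a j / (1 - θ) - 1) = (M:ℝ) * (∑ j, a j) / (1 - θ) - q := by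
            rw [Finset.sum_sub_distrib]
            simp [Finset.sum_div, Finset.mul_sum]
          have h4 : (M:ℝ) / (1 - θ) ≤ (M:ℝ) * (∑ j, a j) / (1 - θ) := by
            gcongr
            nlinarith
          linarith
        have h5 : ((M:ℝ)) - 1 < (M:ℝ) / (1 - θ) - q := by
          rw [div_sub' (ne_of_gt h1θ), lt_div_iff₀ h1θ]
          nlinarith
        have h6 : ((M:ℝ)) - 1 < ((∑ j, t j : ℕ) : ℝ) := by
          rw [Nat.cast_sum]
          linarith
        have : (M:ℝ) < ((∑ j, t j : ℕ) : ℝ) + 1 := by linarith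
        exact_mod_cast Nat.lt_add_one_iff.mp (by exact_mod_cast this)
      obtain ⟨k, hk, hksum⟩ := exists_le_sum Finset.univ t M htsum
      set m : Multiset (Fin q) := ∑ j, (k j) • ({j} : Multiset (Fin q)) with hm
      have hmcard : Multiset.card m = M := by
        rw [hm]
        have := map_sum (⟨⟨Multiset.card, Multiset.card_zero⟩, Multiset.card_add⟩ :
          Multiset (Fin q) →+ ℕ) (fun j => (k j) • ({j} : Multiset (Fin q))) Finset.univ
        simp only [AddMonoidHom.coe_mk, ZeroHom.coe_mk] at this
        rw [this]
        simpa [Multiset.card_nsmul] using hksum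
      set s : Sym (Fin q) M := ⟨m, hmcard⟩ with hs
      have hcount : ∀ j, (s : Multiset (Fin q)).count j = k j := by
        intro j
        show m.count j = k j
        rw [hm, Multiset.count_sum']
        simp [Multiset.count_singleton]
      refine ⟨f s, Finset.mem_image_of_mem f (Finset.mem_univ _), ?_⟩
      intro j
      have hkj : (k j : ℝ) ≤ (M:ℝ) * a j / (1 - θ) := by
        calc (k j : ℝ) ≤ (t j : ℝ) := by exact_mod_cast hk j
          _ ≤ (M:ℝ) * a j / (1 - θ) :=
              Nat.floor_le (div_nonneg (mul_nonneg hM0'.le (ha0 j)) h1θ.le)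
      have hfs : f s j = (k j : ℝ) / M := by
        simp only [f, hcount j]
      rw [hfs]
      -- goal: A j ≤ -((k j)/M) * (1-θ) * Λ
      have h7 : (k j : ℝ) * (1 - θ) ≤ (M:ℝ) * a j := by
        rw [le_div_iff₀ h1θ] at hkj
        exact hkj
      have h8 : (M:ℝ) * a j = (M:ℝ) * (-A j) / Λ := by rw [ha]; ring
      have h9 : (k j : ℝ) * (1 - θ) * Λ ≤ (M:ℝ) * (-A j) := by
        rw [h8] at h7
        rw [← le_div_iff₀ hΛ]
        exact h7
      have h10 : (k j : ℝ) / M * (1 - θ) * Λ ≤ -A j := by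
        rw [div_mul_eq_mul_div, div_mul_eq_mul_div, div_le_iff₀ hM0']
        nlinarith
      linarith
end

section
/- Let n ≥ 1, m ≥ n be integers, l an integer with n ≤ l ≤ m, and δ, δ′ real numbers with 0 < δ′ ≤ min(δ, l − n + 1). Then for all real numbers c_0 ≥ c_1 ≥ ⋯ ≥ c_m ≥ 0, one has (1/δ′)(c_0 + ⋯ + c_l) ≥ ((n + δ)/((m+1)δ)) (c_0 + ⋯ + c_m). -/
open Finset

theorem stmt_6 (n m l : ℕ) (hn : 1 ≤ n) (hnm : n ≤ m) (hnl : n ≤ l) (hlm : l ≤ m)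
    (δ δ' : ℝ) (h0 : 0 < δ') (hδ : δ' ≤ δ) (hδ' : δ' ≤ (l : ℝ) - n + 1)
    (c : Fin (m + 1) → ℝ) (hdec : ∀ i j : Fin (m + 1), i ≤ j → c j ≤ c i)
    (hnn : ∀ i, 0 ≤ c i) :
    ((n + δ) / ((m + 1) * δ)) * ∑ i, c i ≤
      (1 / δ') * ∑ i ∈ Finset.univ.filter (fun i : Fin (m + 1) => (i : ℕ) ≤ l), c i := by
  set lf : Fin (m + 1) := ⟨l, by omega⟩ with hlf
  have hfilt : Finset.univ.filter (fun i : Fin (m + 1) => (i : ℕ) ≤ l) = Finset.Iic lf := by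
    ext i; simp [Fin.le_def, hlf]
  set T : ℝ := ∑ i ∈ Finset.univ.filter (fun i : Fin (m + 1) => (i : ℕ) ≤ l), c i with hT
  set S : ℝ := ∑ i : Fin (m + 1), c i with hS
  have hTnn : 0 ≤ T := Finset.sum_nonneg fun i _ => hnn i
  have hSnn : 0 ≤ S := Finset.sum_nonneg fun i _ => hnn i
  -- lower bound on T
  have hTlb : (l + 1 : ℝ) * c lf ≤ T := by
    have := Finset.card_nsmul_le_sum (Finset.Iic lf) c (c lf)
      (fun i hi => hdec i lf (Finset.mem_Iic.mp hi))
    rw [Fin.card_Iic] at this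
    simpa [hT, hfilt, nsmul_eq_mul] using this
  -- upper bound on R
  have hsplit : S = T + ∑ i ∈ Finset.univ.filter (fun i : Fin (m + 1) => ¬ (i : ℕ) ≤ l), c i := by
    rw [hS, hT, Finset.sum_filter_add_sum_filter_not]
  set R : ℝ := ∑ i ∈ Finset.univ.filter (fun i : Fin (m + 1) => ¬ (i : ℕ) ≤ l), c i with hR
  have hRub : R ≤ (m - l : ℝ) * c lf := by
    have hcard : (Finset.univ.filter (fun i : Fin (m + 1) => ¬ (i : ℕ) ≤ l)).card = m - l := by
      have := Finset.card_filter_add_card_filter_not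
        (s := (Finset.univ : Finset (Fin (m + 1)))) (p := fun i : Fin (m + 1) => (i : ℕ) ≤ l)
      rw [hfilt, Fin.card_Iic] at this
      simp only [Finset.card_univ, Fintype.card_fin] at this
      simp only [hlf, Fin.val_mk] at this
      omega
    have := Finset.sum_le_card_nsmul (Finset.univ.filter (fun i : Fin (m + 1) => ¬ (i : ℕ) ≤ l))
      c (c lf) (fun i hi => by
        apply hdec lf i
        simp only [Finset.mem_filter] at hi
        simp only [Fin.le_def, hlf]
        omega)
    rw [hcard] at this
    have hml : ((m - l : ℕ) : ℝ) = (m : ℝ) - l := by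
      push_cast [Nat.cast_sub hlm]; ring
    calc R ≤ (m - l : ℕ) • c lf := this
      _ = (m - l : ℝ) * c lf := by rw [nsmul_eq_mul, hml]
  have hclnn : 0 ≤ c lf := hnn lf
  have hkey : (l + 1 : ℝ) * S ≤ (m + 1 : ℝ) * T := by
    have hml : (0:ℝ) ≤ (m:ℝ) - l := by
      have : (l:ℝ) ≤ m := by exact_mod_cast hlm
      linarith
    nlinarith [mul_le_mul_of_nonneg_left hRub (by positivity : (0:ℝ) ≤ (l+1:ℝ)),
      mul_le_mul_of_nonneg_left hTlb hml]
  have hδpos : 0 < δ := lt_of_lt_of_le h0 hδ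
  have hratio : (n + δ) * δ' ≤ (l + 1 : ℝ) * δ := by
    have h1 : (n:ℝ) + δ' ≤ l + 1 := by linarith
    nlinarith
  rw [div_mul_eq_mul_div, one_div, inv_mul_eq_div, div_le_div_iff₀ (by positivity) h0]
  nlinarith [mul_le_mul_of_nonneg_right hratio hSnn,
    mul_le_mul_of_nonneg_left hkey hδpos.le]
end

section
/- Let X be an irreducible subvariety of dimension n ≥ 1 of a projective variety V, and let D_1, …, D_q be divisors on V, none containing X, which are in m-subgeneral position with respect to X (i.e., for every subset J ⊆ {1,…,q} with #J ≤ m+1, dim(X ∩ ⋂_{j∈J} D_j) ≤ m − #J, and any m+1 of them have empty intersection with X). Then the distributive constant δ_{D,X} = max_{∅ ≠ J ⊆ {1,…,q}} #J / (n − dim(X ∩ ⋂_{j∈J} D_j)) satisfies δ_{D,X} ≤ m − n + 1. -/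
open Finset

theorem stmt_10 (V : Type*) [TopologicalSpace V] (q n m : ℕ) (hn : 1 ≤ n) (hnm : n ≤ m)
    (X : Set V) (hXcl : IsClosed X) (hXirr : IsIrreducible X)
    (hXdim : topologicalKrullDim X = ((n : ℕ∞) : WithBot ℕ∞))
    (D : Fin q → Set V) (hDcl : ∀ j, IsClosed (D j)) (hXD : ∀ j, ¬ X ⊆ D j)
    -- m-subgeneral position with respect to X:
    (hsub : ∀ J : Finset (Fin q), J.Nonempty → J.card ≤ m + 1 →
      ∀ d : ℕ, topologicalKrullDim ↥(X ∩ ⋂ j ∈ J, D j) = ((d : ℕ∞) : WithBot ℕ∞) →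
        (d : ℤ) ≤ (m : ℤ) - J.card)
    (hempty : ∀ J : Finset (Fin q), J.card = m + 1 → X ∩ ⋂ j ∈ J, D j = ∅) :
    -- the distributive constant is at most m - n + 1 : every ratio is ≤ m - n + 1
    ∀ J : Finset (Fin q), J.Nonempty →
      ∀ d : ℕ, topologicalKrullDim ↥(X ∩ ⋂ j ∈ J, D j) = ((d : ℕ∞) : WithBot ℕ∞) →
        (J.card : ℝ) / ((n : ℝ) - d) ≤ (m : ℝ) - n + 1 := by
  intro J hJ d hd
  by_cases hcard : J.card ≤ m + 1
  · have hdm : (d : ℤ) ≤ (m : ℤ) - J.card := hsub J hJ hcard d hd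
    rcases lt_or_ge (d : ℝ) (n : ℝ) with h | h
    · have hpos : (0 : ℝ) < (n : ℝ) - d := by linarith
      rw [div_le_iff₀ hpos]
      have hint : (J.card : ℤ) ≤ (m : ℤ) - (d : ℤ) := by linarith
      have h1 : (J.card : ℝ) ≤ (m : ℝ) - d := by exact_mod_cast hint
      have h2 : (m : ℝ) - n ≥ 0 := by
        have : (n : ℝ) ≤ m := by exact_mod_cast hnm
        linarith
      have h3 : (d : ℝ) + 1 ≤ n := by
        have : d < n := by exact_mod_cast h
        exact_mod_cast this
      nlinarith
    · have hle : (J.card : ℝ) / ((n : ℝ) - d) ≤ 0 :=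
        div_nonpos_of_nonneg_of_nonpos (by positivity) (by linarith)
      have : (n : ℝ) ≤ m := by exact_mod_cast hnm
      linarith
  · exfalso
    obtain ⟨J', hJ'sub, hJ'card⟩ := Finset.exists_subset_card_eq (s := J) (n := m + 1) (le_of_not_ge hcard)
    have hempty' := hempty J' hJ'card
    have hsubset : X ∩ ⋂ j ∈ J, D j ⊆ X ∩ ⋂ j ∈ J', D j := by
      refine Set.inter_subset_inter_right X ?_
      intro x hx
      simp only [Set.mem_iInter] at hx ⊢
      exact fun j hj => hx j (hJ'sub hj)
    have hset : X ∩ ⋂ j ∈ J, D j = ∅ := by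
      rw [← Set.subset_empty_iff, ← hempty']; exact hsubset
    rw [hset] at hd
    have hie : IsEmpty ↥(∅ : Set V) := Set.isEmpty_coe_sort.mpr rfl
    have hie2 : IsEmpty (TopologicalSpace.IrreducibleCloseds ↥(∅ : Set V)) :=
      ⟨fun s => (hie.false s.isIrreducible'.nonempty.some)⟩
    have hbot : topologicalKrullDim ↥(∅ : Set V) = ⊥ :=
      Order.krullDim_eq_bot
    rw [hbot] at hd
    exact absurd hd.symm (by simp)
end

section
/- Let n ≥ 1, l ≥ n be integers and suppose 0 = t_0 < t_1 < ⋯ < t_n = l are integers such that δ ≥ t_u/u for all u = 1, …, n, where δ > 0 is real. Then for real numbers λ_0 ≥ λ_1 ≥ ⋯ ≥ λ_l ≥ 0, one has λ_{t_0} · (t_1 − t_0) + λ_{t_1} · (t_2 − t_1) + ⋯ + λ_{t_{n−1}} · (t_n − t_{n−1}) ≤ δ · (λ_{t_0} + λ_{t_1} + ⋯ + λ_{t_{n−1}}). -/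
open Finset

lemma abel_aux_s13 (c b : ℕ → ℝ) : ∀ m, ∑ s ∈ Finset.range m, (c (s+1) - c s) * b s
    = (∑ s ∈ Finset.range m, c (s+1) * (b s - b (s+1))) + c m * b m - c 0 * b 0 := by
  intro m
  induction m with
  | zero => simp
  | succ m ih => rw [Finset.sum_range_succ, Finset.sum_range_succ, ih]; ring

theorem stmt_13 (n l : ℕ) (hn : 1 ≤ n) (hln : n ≤ l) (t : ℕ → ℕ)
    (ht0 : t 0 = 0) (htn : t n = l) (hmono : ∀ u < n, t u < t (u + 1))
    (δ : ℝ) (hδ0 : 0 < δ) (hδ : ∀ u, 1 ≤ u → u ≤ n → (t u : ℝ) / u ≤ δ)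
    (lam : ℕ → ℝ) (hdec : ∀ i j, i ≤ j → j ≤ l → lam j ≤ lam i)
    (hnn : ∀ i, i ≤ l → 0 ≤ lam i) :
    ∑ s ∈ Finset.range n, ((t (s + 1) : ℝ) - t s) * lam (t s) ≤
      δ * ∑ s ∈ Finset.range n, lam (t s) := by
  -- monotonicity of t on [0, n]
  have hmono' : ∀ v, v ≤ n → ∀ u, u ≤ v → t u ≤ t v := by
    intro v hv
    induction v with
    | zero =>
      intro u hu
      have : u = 0 := Nat.le_zero.mp hu
      simp [this]
    | succ v ih =>
      intro u hu
      rcases Nat.lt_succ_iff_lt_or_eq.mp (Nat.lt_succ_of_le hu) with h | h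
      · exact le_of_lt (lt_of_le_of_lt (ih (by omega) u (by omega))
          (hmono v (by omega)))
      · exact h ▸ le_rfl
  have htle : ∀ s, s ≤ n → t s ≤ l := by
    intro s hs
    have := hmono' n le_rfl s hs
    omega
  set b : ℕ → ℝ := fun u => if u = n then 0 else lam (t u) with hb
  have hbs : ∀ s, s < n → b s = lam (t s) := by
    intro s hs; simp [hb, Nat.ne_of_lt hs]
  have hbn : b n = 0 := by simp [hb]
  have hbdiff : ∀ s, s < n → 0 ≤ b s - b (s + 1) := by
    intro s hs
    rw [hbs s hs]
    rcases eq_or_lt_of_le (Nat.succ_le_of_lt hs) with h | h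
    · have hb1 : b (s + 1) = 0 := by simp [hb, show s + 1 = n from h]
      rw [hb1]
      simpa using hnn (t s) (htle s (le_of_lt hs))
    · rw [hbs (s+1) h]
      have := hdec (t s) (t (s+1)) (le_of_lt (hmono s hs)) (htle (s+1) (by omega))
      linarith
  -- rewrite LHS
  have e1 : ∑ s ∈ Finset.range n, ((t (s + 1) : ℝ) - t s) * lam (t s)
      = ∑ s ∈ Finset.range n, (t (s+1) : ℝ) * (b s - b (s+1)) := by
    have hsum : ∑ s ∈ Finset.range n, ((t (s + 1) : ℝ) - t s) * lam (t s)
        = ∑ s ∈ Finset.range n, ((t (s + 1) : ℝ) - t s) * b s :=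
      Finset.sum_congr rfl (fun s hs => by rw [hbs s (Finset.mem_range.mp hs)])
    rw [hsum]
    have := abel_aux_s13 (fun u => (t u : ℝ)) b n
    simp only [ht0, hbn] at this
    push_cast at this
    linarith [this]
  have e2 : ∑ s ∈ Finset.range n, lam (t s)
      = ∑ s ∈ Finset.range n, ((s : ℝ) + 1) * (b s - b (s+1)) := by
    have := abel_aux_s13 (fun u => (u : ℝ)) b n
    simp only [hbn] at this
    push_cast at this
    rw [show ∑ s ∈ Finset.range n, lam (t s) = ∑ s ∈ Finset.range n, b s from
      Finset.sum_congr rfl (fun s hs => (hbs s (Finset.mem_range.mp hs)).symm)]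
    have e3 : ∑ s ∈ Finset.range n, b s
        = ∑ s ∈ Finset.range n, ((s:ℝ) + 1 - s) * b s := by
      apply Finset.sum_congr rfl; intro s _; ring
    rw [e3]
    linarith [this]
  rw [e1, e2, Finset.mul_sum]
  apply Finset.sum_le_sum
  intro s hs
  have hs' := Finset.mem_range.mp hs
  have h1 : (t (s+1) : ℝ) ≤ δ * ((s : ℝ) + 1) := by
    have := hδ (s+1) (by omega) (by omega)
    rw [div_le_iff₀ (by positivity)] at this
    push_cast at this ⊢
    linarith
  have h2 := hbdiff s hs'
  calc (t (s+1) : ℝ) * (b s - b (s+1)) ≤ δ * ((s:ℝ)+1) * (b s - b (s+1)) :=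
        mul_le_mul_of_nonneg_right h1 h2
    _ = δ * (((s:ℝ)+1) * (b s - b (s+1))) := by ring
end
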